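/- Fix c > 0 and N ≥ 1. There is no measurable function g : ℝ^N → [c, ∞) with g(X) integrable such that E[g(X)] = θ whenever X = (X_1,...,X_N) has i.i.d. N(0, θ) entries, for all θ ≥ c. -/

import Mathlib

open MeasureTheory ProbabilityTheory

lemma pi_absolutelyContinuous_aux {N : ℕ} (μ ν : Fin N → Measure ℝ)
    [∀ i, SigmaFinite (μ i)] [∀ i, SigmaFinite (ν i)]
    (h : ∀ i, μ i ≪ ν i) : Measure.pi μ ≪ Measure.pi ν := by
  induction N with
  | zero =>
      rw [Measure.pi_of_empty μ, Measure.pi_of_empty ν]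
  | succ n ih =>
      set e := MeasurableEquiv.piFinSuccAbove (fun _ : Fin (n + 1) => ℝ) 0
      have hμ := measurePreserving_piFinSuccAbove μ 0
      have hν := measurePreserving_piFinSuccAbove ν 0
      have hμ' := (hμ.symm e).map_eq
      have hν' := (hν.symm e).map_eq
      rw [← hμ', ← hν']
      have hac : (μ 0).prod (Measure.pi fun j => μ ((0 : Fin (n+1)).succAbove j)) ≪
          (ν 0).prod (Measure.pi fun j => ν ((0 : Fin (n+1)).succAbove j)) :=
        (h 0).prod (ih _ _ (fun j => h _))
      exact hac.map e.symm.measurable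

theorem no_unbiased_variance_estimator (N : ℕ) (hN : 1 ≤ N) (c : NNReal) (hc : 0 < c) :
    ¬ ∃ g : (Fin N → ℝ) → ℝ, Measurable g ∧ (∀ x, (c : ℝ) ≤ g x) ∧
      ∀ θ : NNReal, c ≤ θ →
        Integrable g (Measure.pi fun _ : Fin N => gaussianReal 0 θ) ∧
        ∫ x, g x ∂(Measure.pi fun _ : Fin N => gaussianReal 0 θ) = (θ : ℝ) := by
  rintro ⟨g, hg, hgc, hθ⟩
  set μc : Measure (Fin N → ℝ) := Measure.pi fun _ : Fin N => gaussianReal 0 c with hμc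
  obtain ⟨hint_c, hval_c⟩ := hθ c le_rfl
  -- g = c a.e. wrt μc
  have hnonneg : 0 ≤ fun x => g x - (c : ℝ) := fun x => sub_nonneg.2 (hgc x)
  have hint' : Integrable (fun x => g x - (c : ℝ)) μc := hint_c.sub (integrable_const _)
  have hzero : ∫ x, (g x - (c : ℝ)) ∂μc = 0 := by
    have : IsProbabilityMeasure μc := by infer_instance
    rw [integral_sub hint_c (integrable_const _), hval_c, integral_const]
    simp
  have hae : (fun x => g x - (c : ℝ)) =ᵐ[μc] 0 :=
    (integral_eq_zero_iff_of_nonneg hnonneg hint').mp hzero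
  have haec : g =ᵐ[μc] fun _ => (c : ℝ) := by
    filter_upwards [hae] with x hx
    have : g x - (c : ℝ) = 0 := hx
    linarith
  -- absolute continuity
  have hcc : c ≤ c + c := le_add_of_nonneg_right zero_le
  have hne : c + c ≠ 0 := by positivity
  have hac : (Measure.pi fun _ : Fin N => gaussianReal 0 (c + c)) ≪ μc := by
    refine pi_absolutelyContinuous_aux _ _ (fun i => ?_)
    exact (gaussianReal_absolutelyContinuous 0 hne).trans
      (gaussianReal_absolutelyContinuous' 0 hc.ne')
  obtain ⟨hint2, hval2⟩ := hθ (c + c) hcc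
  have haec2 : g =ᵐ[Measure.pi fun _ : Fin N => gaussianReal 0 (c + c)]
      fun _ => (c : ℝ) := hac.ae_eq haec
  have : IsProbabilityMeasure (Measure.pi fun _ : Fin N => gaussianReal 0 (c + c)) := by
    infer_instance
  have h2 : ((c + c : NNReal) : ℝ) = (c : ℝ) := by
    rw [← hval2, integral_congr_ae haec2, integral_const]
    simp
  have : (c : ℝ) = 0 := by push_cast at h2; linarith
  exact absurd this (by exact_mod_cast hc.ne')
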